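/- arXiv:1507.03391 — 2 statements merged into one kernel-verified Lean document; each statement's English description precedes it below -/
import Mathlib

section
/- Let (b_n), (T_n) be nonnegative sequences and (c_n) a sequence in (0,1). If ∑_{n=0}^∞ b_n T_n < ∞ and ∑_{n=0}^∞ ln(c_n) = -∞, then ∑_{n=0}^∞ ln( e^{2 b_n T_n} (c_n + b_n T_n) ) = -∞. -/
open Filter Finset
open scoped Topology

theorem sum_log_general_diverges (b T c : ℕ → ℝ) (hb : ∀ n, 0 ≤ b n) (hT : ∀ n, 0 ≤ T n)
    (hc : ∀ n, c n ∈ Set.Ioo (0 : ℝ) 1)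
    (hsum : Summable (fun n => b n * T n))
    (hlog : Tendsto (fun n => ∑ p ∈ Finset.range (n + 1), Real.log (c p)) atTop atBot) :
    Tendsto
      (fun n => ∑ p ∈ Finset.range (n + 1),
        Real.log (Real.exp (2 * b p * T p) * (c p + b p * T p))) atTop atBot := by
  set x : ℕ → ℝ := fun p => b p * T p with hxdef
  have hx : ∀ p, 0 ≤ x p := fun p => mul_nonneg (hb p) (hT p)
  set m : ℕ → ℝ := fun p => max (Real.log (c p)) (-Real.log 2) with hmdef
  have hm_neg : ∀ p, m p < 0 := by
    intro p
    apply max_lt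
    · exact Real.log_neg (hc p).1 (hc p).2
    · simpa using Real.log_pos (by norm_num)
  -- pointwise bound
  have key : ∀ p, Real.log (Real.exp (2 * b p * T p) * (c p + b p * T p))
      ≤ 4 * x p + m p := by
    intro p
    have hcp := hc p
    have hxp := hx p
    have hpos : 0 < c p + x p := by
      have := hcp.1; linarith
    have h1 : Real.log (Real.exp (2 * b p * T p) * (c p + b p * T p))
        = 2 * x p + Real.log (c p + x p) := by
      rw [Real.log_mul (Real.exp_ne_zero _) (ne_of_gt hpos), Real.log_exp]
      ring_nf
      rfl
    rw [h1]
    -- show log (c + x) ≤ 2 * x + m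
    have hd : (0:ℝ) < max (c p) (1/2) := lt_max_of_lt_right (by norm_num)
    have hle : c p + x p ≤ max (c p) (1/2) * Real.exp (2 * x p) := by
      have hexp : 1 + 2 * x p ≤ Real.exp (2 * x p) := by
        have := Real.add_one_le_exp (2 * x p); linarith
      have h2 : c p + x p ≤ max (c p) (1/2) * (1 + 2 * x p) := by
        have hc1 : c p ≤ max (c p) (1/2) := le_max_left _ _
        have hc2 : (1/2:ℝ) ≤ max (c p) (1/2) := le_max_right _ _
        nlinarith
      calc c p + x p ≤ max (c p) (1/2) * (1 + 2 * x p) := h2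
        _ ≤ max (c p) (1/2) * Real.exp (2 * x p) :=
          mul_le_mul_of_nonneg_left hexp hd.le
    have hlog2 : Real.log (c p + x p) ≤ Real.log (max (c p) (1/2)) + 2 * x p := by
      calc Real.log (c p + x p) ≤ Real.log (max (c p) (1/2) * Real.exp (2 * x p)) :=
            Real.log_le_log hpos hle
        _ = Real.log (max (c p) (1/2)) + 2 * x p := by
            rw [Real.log_mul (ne_of_gt hd) (Real.exp_ne_zero _), Real.log_exp]
    have hlogmax : Real.log (max (c p) (1/2)) = m p := by
      rcases max_cases (c p) (1/2 : ℝ) with ⟨h, h'⟩ | ⟨h, h'⟩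
      · rw [h, hmdef]
        have : -Real.log 2 ≤ Real.log (c p) := by
          have : Real.log (1/2 : ℝ) ≤ Real.log (c p) :=
            Real.log_le_log (by norm_num) h'
          rw [show (1/2:ℝ) = 2⁻¹ by norm_num, Real.log_inv] at this
          exact this
        simp [max_eq_left this]
      · rw [h, hmdef]
        have h2 : Real.log (1/2 : ℝ) = -Real.log 2 := by
          rw [show (1/2:ℝ) = 2⁻¹ by norm_num, Real.log_inv]
        rw [h2]
        have : Real.log (c p) ≤ -Real.log 2 := by
          have := Real.log_le_log (hc p).1 h'.le
          rw [show (1/2:ℝ) = 2⁻¹ by norm_num, Real.log_inv] at this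
          exact this
        simp [max_eq_right this]
    linarith
  -- partial sums of m tend to -∞
  have hmsum : Tendsto (fun n => ∑ p ∈ Finset.range (n + 1), m p) atTop atBot := by
    have hanti : Antitone (fun n => ∑ p ∈ Finset.range (n + 1), m p) := by
      apply antitone_nat_of_succ_le
      intro n
      rw [Finset.sum_range_succ (n := n + 1)]
      have := hm_neg (n + 1)
      linarith
    rcases tendsto_of_antitone hanti with h | ⟨L, hL⟩
    · exact h
    · exfalso
      have hLb : ∀ n, L ≤ ∑ p ∈ Finset.range (n + 1), m p := fun n =>
        hanti.le_of_tendsto hL n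
      have hsnm : Summable (fun p => -m p) := by
        apply summable_of_sum_range_le (c := -L)
        · intro p; linarith [hm_neg p]
        · intro n
          have h1 : ∑ p ∈ Finset.range n, -m p ≤ ∑ p ∈ Finset.range (n + 1), -m p := by
            rw [Finset.sum_range_succ]
            linarith [hm_neg n]
          have h2 : ∑ p ∈ Finset.range (n + 1), -m p = -(∑ p ∈ Finset.range (n + 1), m p) := by
            rw [Finset.sum_neg_distrib]
          linarith [hLb n]
      have hm0 : Tendsto (fun p => -m p) atTop (𝓝 0) := hsnm.tendsto_atTop_zero
      have hev : ∀ᶠ p in atTop, m p = Real.log (c p) := by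
        have : ∀ᶠ p in atTop, -m p < Real.log 2 := by
          have hpos : (0:ℝ) < Real.log 2 := Real.log_pos (by norm_num)
          exact hm0.eventually_lt_const hpos
        filter_upwards [this] with p hp
        have : -Real.log 2 < m p := by linarith
        rcases max_cases (Real.log (c p)) (-Real.log 2) with ⟨h, h'⟩ | ⟨h, h'⟩
        · exact h
        · exfalso; rw [hmdef] at this; simp only at this; rw [h] at this; linarith
      obtain ⟨N, hN⟩ := eventually_atTop.mp hev
      have hsm : Summable m := by
        have : Summable (fun p => -(-m p)) := hsnm.neg
        simpa using this
      have hslog : Summable (fun p => Real.log (c p)) := by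
        rw [← summable_nat_add_iff N]
        apply Summable.congr ((summable_nat_add_iff N).mpr hsm)
        intro p
        exact hN (p + N) (Nat.le_add_left N p)
      have htends : Tendsto (fun n => ∑ p ∈ Finset.range n, Real.log (c p)) atTop
          (𝓝 (∑' p, Real.log (c p))) := hslog.hasSum.tendsto_sum_nat
      have htends' : Tendsto (fun n => ∑ p ∈ Finset.range (n + 1), Real.log (c p)) atTop
          (𝓝 (∑' p, Real.log (c p))) := htends.comp (tendsto_add_atTop_nat 1)
      exact not_tendsto_atBot_of_tendsto_nhds htends' hlog
  -- conclude
  have hXbound : ∀ n, ∑ p ∈ Finset.range (n + 1), x p ≤ ∑' p, x p := fun n =>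
    Summable.sum_le_tsum _ (fun p _ => hx p) hsum
  apply tendsto_atBot_mono (f := fun n => 4 * (∑' p, x p) + ∑ p ∈ Finset.range (n + 1), m p)
  · intro n
    calc ∑ p ∈ Finset.range (n + 1),
          Real.log (Real.exp (2 * b p * T p) * (c p + b p * T p))
        ≤ ∑ p ∈ Finset.range (n + 1), (4 * x p + m p) :=
          Finset.sum_le_sum (fun p _ => key p)
      _ = 4 * (∑ p ∈ Finset.range (n + 1), x p) + ∑ p ∈ Finset.range (n + 1), m p := by
          rw [Finset.sum_add_distrib, Finset.mul_sum]
      _ ≤ 4 * (∑' p, x p) + ∑ p ∈ Finset.range (n + 1), m p := by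
          have := hXbound n
          nlinarith []
  · exact tendsto_atBot_add_const_left _ _ hmsum
end

section
/- Let (b_n), (T_n) be nonnegative sequences and (c_n) a sequence in (0,1). If ∑_{n=0}^∞ b_n T_n < ∞ and ∑_{n=0}^∞ ln(c_n) = -∞, then ∑_{n=0}^∞ ln(c_n + b_n T_n) = -∞. -/
open Filter Finset

theorem sum_log_shift_diverges_of_sum_log_c (b T c : ℕ → ℝ) (hb : ∀ n, 0 ≤ b n)
    (hT : ∀ n, 0 ≤ T n) (hc : ∀ n, c n ∈ Set.Ioo (0 : ℝ) 1)
    (hsum : Summable (fun n => b n * T n))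
    (hlog : Tendsto (fun n => ∑ p ∈ Finset.range (n + 1), Real.log (c p)) atTop atBot) :
    Tendsto (fun n => ∑ p ∈ Finset.range (n + 1),
        Real.log (c p + b p * T p)) atTop atBot := by
  set x : ℕ → ℝ := fun n => b n * T n with hxdef
  have hx0 : ∀ n, 0 ≤ x n := fun n => mul_nonneg (hb n) (hT n)
  set f : ℕ → ℝ := fun p => max (Real.log (c p)) (-Real.log 2) with hfdef
  have hlog2 : (0:ℝ) < Real.log 2 := Real.log_pos one_lt_two
  have haux : ∀ a t : ℝ, 0 < a → 0 ≤ t → Real.log (a + t) ≤ Real.log a + t / a := by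
    intro a t ha ht
    have h1 : Real.log ((a + t)/a) ≤ (a+t)/a - 1 :=
      Real.log_le_sub_one_of_pos (by positivity)
    have h2 : Real.log ((a+t)/a) = Real.log (a+t) - Real.log a :=
      Real.log_div (by positivity) (ne_of_gt ha)
    have h3 : (a+t)/a - 1 = t / a := by field_simp; ring
    rw [h2, h3] at h1
    linarith
  have hf0 : ∀ p, f p ≤ 0 := by
    intro p
    apply max_le (le_of_lt (Real.log_neg (hc p).1 (hc p).2))
    linarith
  -- pointwise bound
  have key : ∀ p, Real.log (c p + x p) ≤ f p + 2 * x p := by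
    intro p
    have hcp := hc p
    rcases le_or_gt (1/2 : ℝ) (c p) with h | h
    · have h1 := haux (c p) (x p) hcp.1 (hx0 p)
      have hdiv : x p / c p ≤ 2 * x p := by
        rw [div_le_iff₀ hcp.1]
        nlinarith [hx0 p]
      have h2 : Real.log (c p) ≤ f p := le_max_left _ _
      simp only [hfdef]
      linarith [le_max_left (Real.log (c p)) (-Real.log 2)]
    · have h1 : Real.log (c p + x p) ≤ Real.log (1/2 + x p) :=
        Real.log_le_log (add_pos_of_pos_of_nonneg hcp.1 (hx0 p)) (by linarith)
      have h2 := haux (1/2) (x p) (by norm_num) (hx0 p)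
      have h3 : x p / (1/2 : ℝ) = 2 * x p := by ring
      have h4 : Real.log (1/2 : ℝ) = -Real.log 2 := by
        rw [one_div, Real.log_inv]
      rw [h3, h4] at h2
      simp only [hfdef]
      linarith [le_max_right (Real.log (c p)) (-Real.log 2)]
  have hXle : ∀ n, ∑ p ∈ range (n+1), x p ≤ ∑' p, x p :=
    fun n => Summable.sum_le_tsum (range (n+1)) (fun i _ => hx0 i) hsum
  have hS : ∀ n, ∑ p ∈ range (n+1), Real.log (c p + x p) ≤
      (∑ p ∈ range (n+1), f p) + 2 * ∑' p, x p := by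
    intro n
    calc ∑ p ∈ range (n+1), Real.log (c p + x p)
        ≤ ∑ p ∈ range (n+1), (f p + 2 * x p) :=
          Finset.sum_le_sum (fun p _ => key p)
      _ = (∑ p ∈ range (n+1), f p) + 2 * ∑ p ∈ range (n+1), x p := by
          rw [Finset.sum_add_distrib, Finset.mul_sum]
      _ ≤ (∑ p ∈ range (n+1), f p) + 2 * ∑' p, x p := by
          linarith [hXle n]
  have hF : Tendsto (fun n => ∑ p ∈ range (n+1), f p) atTop atBot := by
    by_cases hA : {p : ℕ | c p < 1/2}.Infinite
    · rw [tendsto_atBot]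
      intro M
      obtain ⟨k, hk⟩ : ∃ k : ℕ, -((k:ℝ) * Real.log 2) ≤ M := by
        obtain ⟨k, hk⟩ := exists_nat_ge (-M / Real.log 2)
        refine ⟨k, ?_⟩
        rw [div_le_iff₀ hlog2] at hk
        linarith
      obtain ⟨s, hs, hcard⟩ := hA.exists_subset_card_eq k
      refine eventually_atTop.2 ⟨s.sup id, fun n hn => ?_⟩
      have hsub : s ⊆ range (n+1) := by
        intro p hp
        exact mem_range.2 (Nat.lt_succ_of_le (le_trans (Finset.le_sup (f := id) hp) hn))
      have hneg : ∑ p ∈ s, (-f p) ≤ ∑ p ∈ range (n+1), (-f p) :=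
        Finset.sum_le_sum_of_subset_of_nonneg hsub (fun p _ _ => neg_nonneg.2 (hf0 p))
      rw [Finset.sum_neg_distrib, Finset.sum_neg_distrib, neg_le_neg_iff] at hneg
      calc ∑ p ∈ range (n+1), f p ≤ ∑ p ∈ s, f p := hneg
        _ = ∑ _p ∈ s, (-Real.log 2) := by
            refine Finset.sum_congr rfl (fun p hp => ?_)
            have hpA : c p < 1/2 := hs hp
            simp only [hfdef]
            apply max_eq_right
            have h5 : Real.log (c p) ≤ Real.log (1/2) :=
              Real.log_le_log (hc p).1 (le_of_lt hpA)
            rw [one_div, Real.log_inv] at h5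
            exact h5
        _ = -((k:ℝ) * Real.log 2) := by
            rw [Finset.sum_const, hcard, nsmul_eq_mul]
            ring
        _ ≤ M := hk
    · rw [Set.not_infinite] at hA
      obtain ⟨N, hN⟩ := hA.bddAbove
      have hNA : ∀ p, N < p → (1:ℝ)/2 ≤ c p := by
        intro p hp
        by_contra hcon
        exact absurd (hN (Set.mem_setOf.2 (lt_of_not_ge hcon))) (not_le.2 hp)
      have heq : ∀ n, N ≤ n → (∑ p ∈ range (n+1), f p) =
          (∑ p ∈ range (n+1), Real.log (c p)) +
            ∑ p ∈ range (N+1), (f p - Real.log (c p)) := by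
        intro n hn
        have h1 : (∑ p ∈ range (n+1), f p) - (∑ p ∈ range (n+1), Real.log (c p)) =
            ∑ p ∈ range (n+1), (f p - Real.log (c p)) := by
          rw [Finset.sum_sub_distrib]
        have h2 : ∑ p ∈ range (n+1), (f p - Real.log (c p)) =
            ∑ p ∈ range (N+1), (f p - Real.log (c p)) := by
          symm
          apply Finset.sum_subset (Finset.range_subset_range.2 (by omega))
          intro p _ hp
          have hp' : N < p := by
            simp only [Finset.mem_range] at hp
            omega
          have : f p = Real.log (c p) := by
            simp only [hfdef]
            apply max_eq_left
            have h5 : Real.log (1/2 : ℝ) ≤ Real.log (c p) :=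
              Real.log_le_log (by norm_num) (hNA p hp')
            rw [one_div, Real.log_inv] at h5
            exact h5
          rw [this]
          ring
        linarith [h1, h2]
      have htend : Tendsto (fun n => (∑ p ∈ range (n+1), Real.log (c p)) +
          ∑ p ∈ range (N+1), (f p - Real.log (c p))) atTop atBot :=
        tendsto_atBot_add_const_right _ _ hlog
      exact htend.congr' (eventually_atTop.2 ⟨N, fun n hn => (heq n hn).symm⟩)
  have := tendsto_atBot_add_const_right atTop (2 * ∑' p, x p) hF
  exact tendsto_atBot_mono hS this
end
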